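/- Let X̃ᵢ = aUXᵢ + b for i = 1,…,n, where U is a unitary operator on H, a ≠ 0 is a real scalar, and b ∈ H. Then the trimmed mean of the transformed sample satisfies μ̃ = aU(μ̂) + b, where μ̂ is the trimmed mean of the original sample. -/

import Mathlib

open scoped BigOperators RealInnerProductSpace Pointwise

/-- The `k`-th smallest value (order statistic) of `f : Fin n → ℝ`. -/
noncomputable def kthSmallest {n : ℕ} (f : Fin n → ℝ) (k : ℕ) : ℝ :=
  sInf {t : ℝ | k ≤ (Finset.univ.filter fun j => f j ≤ t).card}

/-- The α-radius `rᵢ`: the `⌈αn⌉`-th smallest interdistance `‖Xᵢ − Xⱼ‖`, `j = 1,…,n`. -/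
noncomputable def sampleRadius {H : Type*} [NormedAddCommGroup H] {n : ℕ}
    (α : ℝ) (X : Fin n → H) (i : Fin n) : ℝ :=
  kthSmallest (fun j => ‖X i - X j‖) ⌈α * n⌉₊

/-- `rank(rᵢ) = #{j : rⱼ < rᵢ} + #{j ≤ i : rⱼ = rᵢ}`. -/
noncomputable def sampleRank {n : ℕ} (r : Fin n → ℝ) (i : Fin n) : ℕ :=
  (Finset.univ.filter fun j => r j < r i).card +
  (Finset.univ.filter fun j => j ≤ i ∧ r j = r i).card

/-- The weight `w(Xᵢ) = g(rank(rᵢ)/n)`. -/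
noncomputable def sampleWeight {H : Type*} [NormedAddCommGroup H] {n : ℕ}
    (g : ℝ → ℝ) (α : ℝ) (X : Fin n → H) (i : Fin n) : ℝ :=
  g ((sampleRank (sampleRadius α X) i : ℝ) / n)

/-- The trimmed mean `μ̂ = Σᵢ w(Xᵢ)Xᵢ / Σᵢ w(Xᵢ)`. -/
noncomputable def trimmedMean {H : Type*} [NormedAddCommGroup H] [InnerProductSpace ℝ H]
    {n : ℕ} (g : ℝ → ℝ) (α : ℝ) (X : Fin n → H) : H :=
  (∑ i, sampleWeight g α X i)⁻¹ • ∑ i, sampleWeight g α X i • X i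

/-- The trimmed covariance operator
`Ĉ(h) = Σᵢ w(Xᵢ)⟨Xᵢ − μ̂, h⟩(Xᵢ − μ̂) / Σᵢ w(Xᵢ)`, as a continuous linear map. -/
noncomputable def trimmedCov {H : Type*} [NormedAddCommGroup H] [InnerProductSpace ℝ H]
    [CompleteSpace H] {n : ℕ} (g : ℝ → ℝ) (α : ℝ) (X : Fin n → H) : H →L[ℝ] H :=
  (∑ i, sampleWeight g α X i)⁻¹ •
    ∑ i, sampleWeight g α X i •
      ((innerSL ℝ (X i - trimmedMean g α X)).smulRight (X i - trimmedMean g α X))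

lemma kthSmallest_smul {n : ℕ} (f : Fin n → ℝ) (k : ℕ) {c : ℝ} (hc : 0 < c) :
    kthSmallest (fun j => c * f j) k = c * kthSmallest f k := by
  unfold kthSmallest
  have hset : {t : ℝ | k ≤ (Finset.univ.filter fun j => c * f j ≤ t).card} =
      c • ({t : ℝ | k ≤ (Finset.univ.filter fun j => f j ≤ t).card} : Set ℝ) := by
    ext t
    simp only [Set.mem_smul_set, Set.mem_setOf_eq]
    constructor
    · intro h
      refine ⟨t / c, ?_, by rw [smul_eq_mul]; field_simp⟩
      have he : (Finset.univ.filter fun j => f j ≤ t / c) =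
          Finset.univ.filter fun j => c * f j ≤ t := by
        apply Finset.filter_congr
        intro j _
        simp [le_div_iff₀ hc, mul_comm]
      rw [he]; exact h
    · rintro ⟨u, hu, rfl⟩
      have he : (Finset.univ.filter fun j => c * f j ≤ c • u) =
          Finset.univ.filter fun j => f j ≤ u := by
        apply Finset.filter_congr
        intro j _
        simp [smul_eq_mul, mul_le_mul_iff_right₀ hc]
      rw [he]; exact hu
  rw [hset]
  rw [Real.sInf_smul_of_nonneg hc.le]
  simp [smul_eq_mul]

lemma sampleRank_smul {n : ℕ} (r : Fin n → ℝ) {c : ℝ} (hc : 0 < c) (i : Fin n) :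
    sampleRank (fun j => c * r j) i = sampleRank r i := by
  unfold sampleRank
  congr 1
  · congr 1; ext j; simp [mul_lt_mul_iff_right₀ hc]
  · congr 1; ext j; simp [mul_right_inj' (ne_of_gt hc)]

/-- If `X̃ᵢ = a • U Xᵢ + b` with `U` unitary, `a ≠ 0`, `b ∈ H`, then the
trimmed mean of the transformed sample satisfies `μ̃ = a • U μ̂ + b`. -/
theorem trimmedMean_equivariance
    {H : Type*} [NormedAddCommGroup H] [InnerProductSpace ℝ H] [CompleteSpace H]
    [SecondCountableTopology H]
    {n : ℕ} (X : Fin n → H) (α β : ℝ)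
    (hα : 0 < α) (hα' : α ≤ 1 / 2) (hβ : 0 ≤ β) (hβ' : β ≤ 1 / 2)
    (g : ℝ → ℝ)
    (hg_nonneg : ∀ t ∈ Set.Icc (0 : ℝ) 1, 0 ≤ g t)
    (hg_bdd : BddAbove (g '' Set.Icc (0 : ℝ) 1))
    (hg_mono : AntitoneOn g (Set.Icc (0 : ℝ) 1))
    (hg_pos : ∀ t ∈ Set.Icc (0 : ℝ) 1, t < 1 - β → 0 < g t)
    (hg_zero : ∀ t ∈ Set.Icc (0 : ℝ) 1, 1 - β ≤ t → g t = 0)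
    (hw_pos : 0 < ∑ i, sampleWeight g α X i)
    (U : H ≃ₗᵢ[ℝ] H) (a : ℝ) (ha : a ≠ 0) (b : H)
    (Xt : Fin n → H) (hXt : ∀ i, Xt i = a • U (X i) + b) :
    trimmedMean g α Xt = a • U (trimmedMean g α X) + b := by
  have ha' : 0 < |a| := abs_pos.mpr ha
  have hrad : sampleRadius α Xt = fun i => |a| * sampleRadius α X i := by
    funext i
    unfold sampleRadius
    have : (fun j => ‖Xt i - Xt j‖) = fun j => |a| * ‖X i - X j‖ := by
      funext j
      rw [hXt, hXt]
      have : a • U (X i) + b - (a • U (X j) + b) = a • (U (X i) - U (X j)) := by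
        rw [smul_sub]; abel
      rw [this, norm_smul, Real.norm_eq_abs, ← LinearIsometryEquiv.map_sub,
        LinearIsometryEquiv.norm_map]
    rw [this, kthSmallest_smul _ _ ha']
  have hw : ∀ i, sampleWeight g α Xt i = sampleWeight g α X i := by
    intro i
    unfold sampleWeight
    rw [hrad, sampleRank_smul _ ha']
  have hs : (∑ i, sampleWeight g α Xt i) = ∑ i, sampleWeight g α X i := by
    simp [hw]
  set s := ∑ i, sampleWeight g α X i with hsdef
  have hsne : s ≠ 0 := ne_of_gt hw_pos
  unfold trimmedMean
  rw [hs]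
  have : ∑ i, sampleWeight g α Xt i • Xt i
      = a • U (∑ i, sampleWeight g α X i • X i) + s • b := by
    rw [map_sum, Finset.smul_sum, hsdef, Finset.sum_smul, ← Finset.sum_add_distrib]
    congr 1
    funext i
    rw [hw, hXt]
    rw [smul_add, map_smul, smul_comm (sampleWeight g α X i) a]
  rw [this, smul_add, smul_comm s⁻¹ a, ← map_smul, map_smul, smul_smul s⁻¹ s b,
    inv_mul_cancel₀ hsne, one_smul]
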